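/- Let (C,·,q) be a Hurwitz superalgebra with C₁ ≠ 0 over a field F of characteristic 2, and let (C,*,q) be the associated para-Hurwitz superalgebra with x*y := x̄·ȳ. Then a decomposition C = ⊕_{g∈G} Cᵍ compatible with the main ℤ₂-grading is a group grading of (C,·) if and only if it is a group grading of (C,*). -/

import Mathlib

open QuadraticMap

/-- The sign `(−1)^i` for a parity `i ∈ ℤ₂`, as an element of `F`. -/
def sgn2 (F : Type*) [Field F] : ZMod 2 → F := fun i => if i = 0 then 1 else -1

/-- `x` is homogeneous of parity `i` with respect to the decomposition `even ⊕ odd`. -/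
def IsPar {F S : Type*} [Field F] [AddCommGroup S] [Module F S]
    (even odd : Submodule F S) (x : S) (i : ZMod 2) : Prop :=
  (i = 0 ∧ x ∈ even) ∨ (i = 1 ∧ x ∈ odd)

/-- A composition superalgebra structure on the vector space `S` with (not necessarily
associative, not necessarily unital) bilinear multiplication `mul`: a `ℤ₂`-graded algebra
`S = even ⊕ odd` with a regular quadratic superform `q = (q0, b)` satisfying the composition
superalgebra axioms. -/
structure SuperComp (F S : Type*) [Field F] [AddCommGroup S] [Module F S]
    (mul : S →ₗ[F] S →ₗ[F] S) where
  even : Submodule F S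
  odd : Submodule F S
  compl : IsCompl even odd
  mul_ee : ∀ x ∈ even, ∀ y ∈ even, mul x y ∈ even
  mul_eo : ∀ x ∈ even, ∀ y ∈ odd, mul x y ∈ odd
  mul_oe : ∀ x ∈ odd, ∀ y ∈ even, mul x y ∈ odd
  mul_oo : ∀ x ∈ odd, ∀ y ∈ odd, mul x y ∈ even
  /-- the quadratic form `q0` on the even part -/
  q0 : QuadraticForm F even
  /-- the even supersymmetric bilinear form `b` -/
  b : S →ₗ[F] S →ₗ[F] F
  /-- on the even part, `b` is the polar form of `q0` -/
  b_polar : ∀ x y : even, b x y = polar q0 x y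
  /-- `b` is alternating on the odd part -/
  b_alt_odd : ∀ x ∈ odd, b x x = 0
  b_alt_skew : ∀ x ∈ odd, ∀ y ∈ odd, b x y = - b y x
  /-- `b` is even: even and odd parts are orthogonal -/
  b_eo : ∀ x ∈ even, ∀ y ∈ odd, b x y = 0 ∧ b y x = 0
  /-- regularity of `q0` (KMRT-style) -/
  q0_reg : ∀ x : even, (∀ y : even, polar q0 x y = 0) → q0 x = 0 → (x : S) = 0
  /-- nondegeneracy of `b` on the odd part -/
  b_odd_nondeg : ∀ x ∈ odd, (∀ y ∈ odd, b x y = 0) → x = 0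
  /-- composition axiom i): `q0` is multiplicative on the even part -/
  comp_i : ∀ x y : even, q0 ⟨mul x y, mul_ee x x.2 y y.2⟩ = q0 x * q0 y
  /-- composition axiom ii) -/
  comp_ii₁ : ∀ (x : even) (y z : S), b (mul x y) (mul x z) = q0 x * b y z
  comp_ii₂ : ∀ (x : even) (y z : S), b (mul y x) (mul z x) = q0 x * b y z
  /-- composition axiom iii), for homogeneous elements -/
  comp_iii : ∀ (px py pz pt : ZMod 2) (x y z t : S),
    IsPar even odd x px → IsPar even odd y py → IsPar even odd z pz → IsPar even odd t pt →
    b (mul x y) (mul z t) + sgn2 F (px * py + px * pz + py * pz) * b (mul z y) (mul x t)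
      = sgn2 F (py * pz) * (b x z * b y t)

/-- A Hurwitz superalgebra structure: a unital composition superalgebra. -/
structure HurwitzSuperOn (F S : Type*) [Field F] [AddCommGroup S] [Module F S]
    (mul : S →ₗ[F] S →ₗ[F] S) extends SuperComp F S mul where
  one : S
  one_even : one ∈ even
  one_mul : ∀ x : S, mul one x = x
  mul_one : ∀ x : S, mul x one = x

section Aux
variable {F S : Type*} [Field F] [AddCommGroup S] [Module F S]
variable {mul : S →ₗ[F] S →ₗ[F] S}

namespace HurwitzSuperOn
variable (H : HurwitzSuperOn F S mul)

lemma b_even_comm {x y : S} (hx : x ∈ H.even) (hy : y ∈ H.even) : H.b x y = H.b y x := by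
  have h1 := H.b_polar ⟨x, hx⟩ ⟨y, hy⟩
  have h2 := H.b_polar ⟨y, hy⟩ ⟨x, hx⟩
  rw [polar_comm] at h2
  exact h1.trans h2.symm

lemma one_ne_zero' (hodd : H.odd ≠ ⊥) : H.one ≠ 0 := by
  obtain ⟨z, hz, hz0⟩ := Submodule.exists_mem_ne_zero_of_ne_bot hodd
  intro h
  apply hz0
  have h1 := H.one_mul z
  rw [h] at h1
  simpa using h1.symm

lemma q0_one (hodd : H.odd ≠ ⊥) : H.q0 ⟨H.one, H.one_even⟩ = 1 := by
  set X : H.even := ⟨H.one, H.one_even⟩ with hX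
  have h1 : H.q0 X = H.q0 X * H.q0 X := by
    have h := H.comp_i X X
    rw [← h]
    congr 1
    exact Subtype.ext (H.one_mul H.one).symm
  by_contra hne
  have h0 : H.q0 X = 0 := by
    rcases mul_eq_zero.mp (show H.q0 X * (1 - H.q0 X) = 0 by linear_combination h1) with h | h
    · exact h
    · exact absurd (by linear_combination -h : H.q0 X = 1) hne
  have hall : ∀ Y : H.even, H.q0 Y = 0 := by
    intro Y
    have h := H.comp_i X Y
    have he : (⟨mul (X : S) (Y : S), H.mul_ee X X.2 Y Y.2⟩ : H.even) = Y :=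
      Subtype.ext (H.one_mul (Y : S))
    rw [he, h0, zero_mul] at h
    exact h
  have := H.q0_reg X (fun y => by simp [polar, hall]) (hall X)
  exact H.one_ne_zero' hodd this

end HurwitzSuperOn
end Aux

section Aux2
variable {F S : Type*} [Field F] [AddCommGroup S] [Module F S]
variable {mul : S →ₗ[F] S →ₗ[F] S}

lemma two_eq_zero_of_char (hchar : ringChar F = 2) : (2:F) = 0 := by
  have h : ((ringChar F : ℕ) : F) = 0 := ringChar.Nat.cast_ringChar
  rw [hchar] at h
  exact_mod_cast h

lemma neg_eq_self_of_char (h2 : (2:F) = 0) (x : S) : -x = x := by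
  have h : x + x = 0 := by rw [← two_smul F x, h2, zero_smul]
  rw [neg_eq_iff_add_eq_zero]
  exact h

namespace HurwitzSuperOn
variable (H : HurwitzSuperOn F S mul)

lemma b_one_one (h2 : (2:F) = 0) : H.b H.one H.one = 0 := by
  have h := H.b_polar ⟨H.one, H.one_even⟩ ⟨H.one, H.one_even⟩
  rw [polar_self] at h
  refine h.trans ?_
  rw [two_smul]
  have : H.q0 ⟨H.one, H.one_even⟩ + H.q0 ⟨H.one, H.one_even⟩
      = 2 * H.q0 ⟨H.one, H.one_even⟩ := by ring
  rw [this, h2, zero_mul]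

lemma b_even_self (h2 : (2:F) = 0) {x : S} (hx : x ∈ H.even) : H.b x x = 0 := by
  have h := H.b_polar ⟨x, hx⟩ ⟨x, hx⟩
  rw [polar_self] at h
  refine h.trans ?_
  rw [two_smul]
  have : H.q0 ⟨x, hx⟩ + H.q0 ⟨x, hx⟩ = 2 * H.q0 ⟨x, hx⟩ := by ring
  rw [this, h2, zero_mul]

/-- key even-product identity -/
lemma b_sq {x : S} (hx : x ∈ H.even) {z : S} (hz : z ∈ H.even) :
    H.b (mul x x) z = H.b x z * H.b x H.one - H.q0 ⟨x, hx⟩ * H.b z H.one := by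
  have h3 := H.comp_iii 0 0 0 0 x x z H.one (Or.inl ⟨rfl, hx⟩) (Or.inl ⟨rfl, hx⟩)
    (Or.inl ⟨rfl, hz⟩) (Or.inl ⟨rfl, H.one_even⟩)
  have hs : sgn2 F ((0:ZMod 2) * 0 + 0 * 0 + 0 * 0) = 1 := by norm_num [sgn2]
  have hs2 : sgn2 F ((0:ZMod 2) * 0) = 1 := by norm_num [sgn2]
  rw [hs, hs2, _root_.one_mul, _root_.one_mul, H.mul_one, H.mul_one] at h3
  have h2 := H.comp_ii₂ ⟨x, hx⟩ z H.one
  rw [H.one_mul] at h2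
  -- h2 : H.b (mul z x) x = H.q0 ⟨x,hx⟩ * H.b z H.one
  have hxx : H.b (mul z x) x = H.q0 ⟨x, hx⟩ * H.b z H.one := h2
  linear_combination h3 - hxx

end HurwitzSuperOn
end Aux2

section Aux3
variable {F S : Type*} [Field F] [AddCommGroup S] [Module F S]
variable {mul : S →ₗ[F] S →ₗ[F] S}
namespace HurwitzSuperOn
variable (H : HurwitzSuperOn F S mul)

lemma cayley_hamilton (hodd : H.odd ≠ ⊥) (h2 : (2:F) = 0) {x : S} (hx : x ∈ H.even) :
    mul x x = H.b x H.one • x - H.q0 ⟨x, hx⟩ • H.one := by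
  have hxx : mul x x ∈ H.even := H.mul_ee x hx x hx
  set d : S := mul x x - H.b x H.one • x + H.q0 ⟨x, hx⟩ • H.one with hd
  have hde : d ∈ H.even :=
    Submodule.add_mem _ (Submodule.sub_mem _ hxx (Submodule.smul_mem _ _ hx))
      (Submodule.smul_mem _ _ H.one_even)
  have hb11 : H.b H.one H.one = 0 := H.b_one_one h2
  have hbxx : H.b x x = 0 := H.b_even_self h2 hx
  have hb1x : H.b H.one x = H.b x H.one := H.b_even_comm H.one_even hx
  have hbd : ∀ z ∈ H.even, H.b d z = 0 := by
    intro z hz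
    have h1 : H.b (mul x x) z = H.b x z * H.b x H.one - H.q0 ⟨x, hx⟩ * H.b z H.one :=
      H.b_sq hx hz
    have h4 : H.b d z = H.b (mul x x) z - H.b x H.one * H.b x z
        + H.q0 ⟨x, hx⟩ * H.b H.one z := by
      rw [hd]
      simp only [_root_.map_sub, _root_.map_add, _root_.map_smul, LinearMap.sub_apply,
        LinearMap.add_apply, LinearMap.smul_apply, smul_eq_mul]
    rw [h4, h1, H.b_even_comm H.one_even hz]
    ring
  have hDX : (⟨d, hde⟩ : H.even) = ⟨mul x x, hxx⟩
      + (H.q0 ⟨x, hx⟩ • ⟨H.one, H.one_even⟩ - H.b x H.one • ⟨x, hx⟩) := by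
    apply Subtype.ext
    show d = mul x x + (H.q0 ⟨x, hx⟩ • H.one - H.b x H.one • x)
    rw [hd]; abel
  have hq0M : H.q0 (⟨mul x x, hxx⟩ : H.even) = H.q0 ⟨x, hx⟩ * H.q0 ⟨x, hx⟩ :=
    H.comp_i ⟨x, hx⟩ ⟨x, hx⟩
  have hq0On : H.q0 ⟨H.one, H.one_even⟩ = 1 := H.q0_one hodd
  have hpOnX : polar H.q0 ⟨H.one, H.one_even⟩ ⟨x, hx⟩ = H.b x H.one :=
    (H.b_polar ⟨H.one, H.one_even⟩ ⟨x, hx⟩).symm.trans hb1x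
  have hpMOn : polar H.q0 (⟨mul x x, hxx⟩ : H.even) ⟨H.one, H.one_even⟩
      = H.b x H.one * H.b x H.one := by
    have h5 := (H.b_polar (⟨mul x x, hxx⟩ : H.even) ⟨H.one, H.one_even⟩).symm
    rw [H.b_sq hx H.one_even, hb11] at h5
    rw [h5]; ring
  have hpMX : polar H.q0 (⟨mul x x, hxx⟩ : H.even) ⟨x, hx⟩
      = -(H.q0 ⟨x, hx⟩ * H.b x H.one) := by
    have h5 := (H.b_polar (⟨mul x x, hxx⟩ : H.even) ⟨x, hx⟩).symm
    rw [H.b_sq hx hx, hbxx] at h5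
    rw [h5]; ring
  have hq0d : H.q0 ⟨d, hde⟩ = 0 := by
    rw [hDX]
    rw [QuadraticMap.map_add H.q0]
    rw [sub_eq_add_neg, ← neg_smul]
    rw [QuadraticMap.map_add H.q0]
    rw [QuadraticMap.map_smul, QuadraticMap.map_smul, polar_smul_left, polar_smul_right,
      polar_add_right, polar_smul_right, polar_smul_right]
    rw [hpOnX, hq0On, hq0M, hpMOn, hpMX]
    simp only [smul_eq_mul]
    set a : F := H.q0 ⟨x, hx⟩
    set c : F := H.b x H.one
    linear_combination (a * a + a * c * c) * h2
  have hpold : ∀ y : H.even, polar H.q0 ⟨d, hde⟩ y = 0 := by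
    intro y
    rw [← H.b_polar]
    exact hbd y y.2
  have hz := H.q0_reg ⟨d, hde⟩ hpold hq0d
  have hz2 : mul x x - (H.b x H.one • x - H.q0 ⟨x, hx⟩ • H.one) = 0 := by
    rw [show mul x x - (H.b x H.one • x - H.q0 ⟨x, hx⟩ • H.one) = d by rw [hd]; abel]
    exact hz
  exact sub_eq_zero.mp hz2

end HurwitzSuperOn
end Aux3


/-- for a Hurwitz superalgebra `(C,·)` with nonzero odd part in
characteristic 2, a decomposition compatible with the main `ℤ₂`-grading is a group grading
of `(C,·)` iff it is a group grading of the para-Hurwitz superalgebra `(C,*)`,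
where `x*y = x̄·ȳ` and `x̄ = b(x,1)1 − x`. -/
theorem paraHurwitz_gradings_coincide {F S G : Type*} [Field F] [AddCommGroup S]
    [Module F S] [Group G] [DecidableEq G]
    (hchar : ringChar F = 2)
    (mul : S →ₗ[F] S →ₗ[F] S) (H : HurwitzSuperOn F S mul)
    (hodd : H.odd ≠ ⊥)
    (γ : G → Submodule F S) (hint : DirectSum.IsInternal γ)
    (hsuper : ∀ g : G, γ g = (γ g ⊓ H.even) ⊔ (γ g ⊓ H.odd)) :
    (∀ g h : G, ∀ x ∈ γ g, ∀ y ∈ γ h, mul x y ∈ γ (g * h)) ↔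
    (∀ g h : G, ∀ x ∈ γ g, ∀ y ∈ γ h,
      mul (H.b x H.one • H.one - x) (H.b y H.one • H.one - y) ∈ γ (g * h)) := by
  classical
  have h2 : (2:F) = 0 := two_eq_zero_of_char hchar
  have hnegS : ∀ x : S, -x = x := fun x => neg_eq_self_of_char h2 x
  have hnegF : ∀ a : F, -a = a := fun a => neg_eq_self_of_char h2 a
  obtain ⟨z0, hz0o, hz0⟩ := Submodule.exists_mem_ne_zero_of_ne_bot hodd
  obtain ⟨y0, hy0o, hby⟩ : ∃ y ∈ H.odd, H.b z0 y ≠ 0 := by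
    by_contra hcon
    push_neg at hcon
    exact hz0 (H.b_odd_nondeg z0 hz0o hcon)
  have hone0 : H.one ≠ 0 := H.one_ne_zero' hodd
  have hb11 : H.b H.one H.one = 0 := H.b_one_one h2
  have hbo1 : ∀ z ∈ H.odd, H.b z H.one = 0 := fun z hz => (H.b_eo H.one H.one_even z hz).2
  -- component machinery
  set Dec := (LinearEquiv.ofBijective (DirectSum.coeLinearMap γ) hint).symm with hDecDef
  set cp : G → S → S := fun j x => ((Dec x) j : S) with hcpDef
  have hcp_apply : ∀ (j : G) (x : S), cp j x = ((Dec x) j : S) := fun j x => rfl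
  have cp_mem : ∀ j x, cp j x ∈ γ j := fun j x => ((Dec x) j).2
  have cp_hom : ∀ {h : G} {x : S}, x ∈ γ h → ∀ j, cp j x = if j = h then x else 0 := by
    intro h x hx j
    rw [hcp_apply, hDecDef]
    by_cases hj : j = h
    · subst hj
      rw [if_pos rfl, hint.ofBijective_coeLinearMap_of_mem hx]
    · rw [if_neg hj, hint.ofBijective_coeLinearMap_of_mem_ne (fun hc => hj hc.symm) hx]
      rfl
  have cp_nsupp : ∀ {j : G} {x : S}, j ∉ (Dec x).support → cp j x = 0 := by
    intro j x hj
    rw [hcp_apply, DFinsupp.notMem_support_iff.mp hj]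
    rfl
  have cp_add : ∀ (j : G) (x y : S), cp j (x + y) = cp j x + cp j y := by
    intro j x y
    rw [hcp_apply, hcp_apply, hcp_apply, _root_.map_add]
    simp
  have cp_zero : ∀ j : G, cp j 0 = 0 := by
    intro j
    rw [hcp_apply, _root_.map_zero]
    rfl
  have cp_smul : ∀ (j : G) (a : F) (x : S), cp j (a • x) = a • cp j x := by
    intro j a x
    rw [hcp_apply, hcp_apply, _root_.map_smul]
    rw [DirectSum.smul_apply]; rfl
  have cp_neg : ∀ (j : G) (x : S), cp j (-x) = - cp j x := by
    intro j x
    rw [hcp_apply, hcp_apply, _root_.map_neg]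
    rw [show (-(Dec x)) = (0 : DirectSum G fun i => (γ i : Submodule F S)) - Dec x by abel, DirectSum.sub_apply]
    simp
  have cp_sub : ∀ (j : G) (x y : S), cp j (x - y) = cp j x - cp j y := by
    intro j x y
    rw [hcp_apply, hcp_apply, hcp_apply, _root_.map_sub]
    rw [DirectSum.sub_apply]; rfl
  have cp_fsum : ∀ (j : G) (t : Finset G) (f : G → S),
      cp j (∑ m ∈ t, f m) = ∑ m ∈ t, cp j (f m) := by
    intro j t f
    induction t using Finset.cons_induction with
    | empty => simp [cp_zero]
    | cons a t ha ih => rw [Finset.sum_cons, Finset.sum_cons, cp_add, ih]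
  have cp_sum : ∀ x : S, x = ∑ j ∈ (Dec x).support, cp j x := by
    intro x
    have h1 : DirectSum.coeLinearMap γ (Dec x) = x := by
      rw [hDecDef]
      exact (LinearEquiv.ofBijective (DirectSum.coeLinearMap γ) hint).apply_symm_apply x
    have h2' := DirectSum.sum_support_of (Dec x)
    calc x = DirectSum.coeLinearMap γ (Dec x) := h1.symm
      _ = DirectSum.coeLinearMap γ (∑ i ∈ (Dec x).support,
            DirectSum.of (fun i => ↥(γ i)) i ((Dec x) i)) := by rw [h2']
      _ = ∑ i ∈ (Dec x).support, cp i x := by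
            rw [map_sum]
            exact Finset.sum_congr rfl fun i _ => DirectSum.coeLinearMap_of γ i ((Dec x) i)
  have key_cp : ∀ (t : Finset G) (f : G → S) (j k : G) (w : S),
      (∀ m ∈ t, f m ∈ γ (m * j)) → w = ∑ m ∈ t, f m →
      cp (k * j) w = if k ∈ t then f k else 0 := by
    intro t f j k w hm hw
    have h1 : ∀ m ∈ t, cp (k * j) (f m) = if m = k then f m else 0 := by
      intro m hmt
      rw [cp_hom (hm m hmt)]
      by_cases hmk : m = k
      · subst hmk; simp
      · rw [if_neg (fun hc => hmk ((mul_left_inj j).mp hc).symm), if_neg hmk]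
    rw [hw, cp_fsum, Finset.sum_congr rfl h1, Finset.sum_ite_eq' t k f]
  have key_cp0 : ∀ (t : Finset G) (f : G → S) (k : G) (w : S),
      (∀ m ∈ t, f m ∈ γ m) → w = ∑ m ∈ t, f m →
      cp k w = if k ∈ t then f k else 0 := by
    intro t f k w hm hw
    have h1 : ∀ m ∈ t, cp k (f m) = if m = k then f m else 0 := by
      intro m hmt
      rw [cp_hom (hm m hmt)]
      by_cases hmk : m = k
      · subst hmk; simp
      · rw [if_neg (fun hc => hmk hc.symm), if_neg hmk]
    rw [hw, cp_fsum, Finset.sum_congr rfl h1, Finset.sum_ite_eq' t k f]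
  -- parity of components
  have cp_split : ∀ (j : G) (x : S), ∃ a ∈ γ j ⊓ H.even, ∃ b ∈ γ j ⊓ H.odd, a + b = cp j x :=
    fun j x => Submodule.mem_sup.mp (by rw [← hsuper j]; exact cp_mem j x)
  choose pA hpA pB hpB hpAB using cp_split
  have cp_parity : ∀ (x : S) (j : G), (x ∈ H.even → cp j x ∈ H.even) ∧
      (x ∈ H.odd → cp j x ∈ H.odd) := by
    intro x j
    by_cases hj : j ∈ (Dec x).support
    · set SA := ∑ m ∈ (Dec x).support, pA m x with hSA
      set SB := ∑ m ∈ (Dec x).support, pB m x with hSB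
      have hsum : x = SA + SB := by
        rw [hSA, hSB, ← Finset.sum_add_distrib]
        calc x = ∑ m ∈ (Dec x).support, cp m x := cp_sum x
          _ = ∑ m ∈ (Dec x).support, (pA m x + pB m x) :=
              Finset.sum_congr rfl fun m _ => (hpAB m x).symm
      have hSAe : SA ∈ H.even := Submodule.sum_mem _ fun m _ => (hpA m x).2
      have hSBo : SB ∈ H.odd := Submodule.sum_mem _ fun m _ => (hpB m x).2
      have hcpA : cp j SA = if j ∈ (Dec x).support then pA j x else 0 :=
        key_cp0 _ _ j SA (fun m _ => (hpA m x).1) hSA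
      have hcpB : cp j SB = if j ∈ (Dec x).support then pB j x else 0 :=
        key_cp0 _ _ j SB (fun m _ => (hpB m x).1) hSB
      rw [if_pos hj] at hcpA hcpB
      constructor
      · intro hx
        have hSB0 : SB = 0 := by
          have hSBe : SB ∈ H.even := by
            have h' : SB = x - SA := by rw [hsum]; abel
            rw [h']
            exact Submodule.sub_mem _ hx hSAe
          exact Submodule.disjoint_def.mp H.compl.disjoint _ hSBe hSBo
        have hBj : pB j x = 0 := by rw [← hcpB, hSB0, cp_zero]
        rw [← hpAB j x, hBj, add_zero]
        exact (hpA j x).2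
      · intro hx
        have hSA0 : SA = 0 := by
          have hSAo : SA ∈ H.odd := by
            have h' : SA = x - SB := by rw [hsum]; abel
            rw [h']
            exact Submodule.sub_mem _ hx hSBo
          exact Submodule.disjoint_def.mp H.compl.disjoint _ hSAe hSAo
        have hAj : pA j x = 0 := by rw [← hcpA, hSA0, cp_zero]
        rw [← hpAB j x, hAj, zero_add]
        exact (hpB j x).2
    · rw [cp_nsupp hj]
      exact ⟨fun _ => Submodule.zero_mem _, fun _ => Submodule.zero_mem _⟩
  have cp_even : ∀ (x : S), x ∈ H.even → ∀ j, cp j x ∈ H.even :=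
    fun x hx j => (cp_parity x j).1 hx
  have cp_odd : ∀ (x : S), x ∈ H.odd → ∀ j, cp j x ∈ H.odd :=
    fun x hx j => (cp_parity x j).2 hx
  -- bar basics
  have hbarmem_gen : H.one ∈ γ 1 → (∀ h, h ≠ (1:G) → ∀ x ∈ γ h, H.b x H.one = 0) →
      ∀ g, ∀ x ∈ γ g, H.b x H.one • H.one - x ∈ γ g := by
    intro h1e hbx1 g x hx
    by_cases hg : g = 1
    · subst hg
      exact Submodule.sub_mem _ (Submodule.smul_mem _ _ h1e) hx
    · rw [hbx1 g hg x hx, zero_smul, zero_sub]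
      exact Submodule.neg_mem _ hx
  constructor
  · -- (C,·) grading → (C,*) grading
    intro hmul
    have hkill : ∀ k, k ≠ (1:G) → cp k H.one = 0 := by
      intro k hk
      have hz : ∀ (j : G) (x : S), x ∈ γ j → mul (cp k H.one) x = 0 := by
        intro j x hxj
        have hx1 : x = ∑ m ∈ (Dec H.one).support, mul (cp m H.one) x := by
          conv_lhs => rw [← H.one_mul x]
          conv_lhs => rw [cp_sum H.one]
          rw [map_sum, LinearMap.sum_apply]
        have hterm : ∀ m ∈ (Dec H.one).support, mul (cp m H.one) x ∈ γ (m * j) :=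
          fun m _ => hmul m j _ (cp_mem m H.one) x hxj
        have hc := key_cp _ _ j k x hterm hx1
        have hcx : cp (k * j) x = 0 := by
          rw [cp_hom hxj, if_neg (fun hc' => hk (mul_eq_right.mp hc'))]
        rw [hcx] at hc
        by_cases hks : k ∈ (Dec H.one).support
        · rw [if_pos hks] at hc
          exact hc.symm
        · rw [cp_nsupp hks]
          simp
      have esum := map_sum (mul (cp k H.one)) (fun j => cp j H.one) (Dec H.one).support
      calc cp k H.one = mul (cp k H.one) H.one := (H.mul_one _).symm
        _ = mul (cp k H.one) (∑ j ∈ (Dec H.one).support, cp j H.one) := by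
              rw [← cp_sum H.one]
        _ = ∑ j ∈ (Dec H.one).support, mul (cp k H.one) (cp j H.one) := esum
        _ = 0 := Finset.sum_eq_zero fun j _ => hz j _ (cp_mem j H.one)
    have h1e : H.one ∈ γ 1 := by
      rw [cp_sum H.one]
      refine Submodule.sum_mem _ (fun m _ => ?_)
      by_cases hm : m = 1
      · subst hm
        exact cp_mem 1 H.one
      · rw [hkill m hm]
        exact Submodule.zero_mem _
    have hbx1 : ∀ h, h ≠ (1:G) → ∀ x ∈ γ h, H.b x H.one = 0 := by
      intro h hh x hx
      obtain ⟨xe, hxe, xo, hxo, hxeo⟩ := Submodule.mem_sup.mp (by rw [← hsuper h]; exact hx)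
      have hbxo : H.b xo H.one = 0 := hbo1 xo hxo.2
      have hCHxe := H.cayley_hamilton hodd h2 hxe.2
      have hcL : cp h (mul xe xe) = 0 := by
        rw [cp_hom (hmul h h xe hxe.1 xe hxe.1),
          if_neg (fun hc : h = h * h => hh (mul_eq_right.mp hc.symm))]
      have hcR : cp h (H.b xe H.one • xe - H.q0 ⟨xe, hxe.2⟩ • H.one) = H.b xe H.one • xe := by
        rw [cp_sub, cp_smul, cp_smul, cp_hom hxe.1, cp_hom h1e, if_pos rfl, if_neg hh,
          smul_zero, sub_zero]
      have hzero : H.b xe H.one • xe = 0 := by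
        rw [← hcR, ← hCHxe]
        exact hcL
      have hsx : H.b xe H.one = 0 := by
        rcases smul_eq_zero.mp hzero with h' | h'
        · exact h'
        · rw [h']
          simp
      have hxsum : H.b x H.one = H.b xe H.one + H.b xo H.one := by
        rw [← hxeo, _root_.map_add, LinearMap.add_apply]
      rw [hxsum, hsx, hbxo, add_zero]
    intro g h x hx y hy
    exact hmul g h _ (hbarmem_gen h1e hbx1 g x hx) _ (hbarmem_gen h1e hbx1 h y hy)
  · -- (C,*) grading → (C,·) grading
    intro hpara
    set c : G → S := fun m => cp m H.one with hcdef
    have hc_apply : ∀ m, c m = cp m H.one := fun m => rfl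
    have hc_mem : ∀ m, c m ∈ γ m := fun m => cp_mem m H.one
    have hc_even : ∀ m, c m ∈ H.even := fun m => cp_even H.one H.one_even m
    set s1 : Finset G := (Dec H.one).support with hs1def
    have hsum1 : H.one = ∑ m ∈ s1, c m := cp_sum H.one
    set barL : S →ₗ[F] S := LinearMap.smulRight (H.b.flip H.one) H.one - LinearMap.id
      with hbarLdef
    have hbar : ∀ x : S, barL x = H.b x H.one • H.one - x := by
      intro x
      rw [hbarLdef]
      simp [LinearMap.sub_apply, LinearMap.smulRight_apply, LinearMap.flip_apply]
    have hbar1 : barL H.one = H.one := by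
      rw [hbar, hb11, zero_smul, zero_sub, hnegS]
    have KEY : ∀ (h : G) (x : S), x ∈ γ h → ∀ k : G,
        mul (barL (c k)) (barL x) = cp (k * h) (barL x) := by
      intro h x hx k
      have hx1 : barL x = ∑ m ∈ s1, mul (barL (c m)) (barL x) := by
        conv_lhs => rw [← H.one_mul (barL x), ← hbar1]
        rw [hsum1, map_sum, map_sum, LinearMap.sum_apply]
      have hterm : ∀ m ∈ s1, mul (barL (c m)) (barL x) ∈ γ (m * h) := by
        intro m _
        have hp := hpara m h (c m) (hc_mem m) x hx
        rw [← hbar, ← hbar] at hp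
        exact hp
      have hc2 := key_cp s1 _ h k _ hterm hx1
      by_cases hks : k ∈ s1
      · rw [if_pos hks] at hc2
        exact hc2.symm
      · rw [if_neg hks] at hc2
        have hck : c k = 0 := cp_nsupp hks
        rw [hck, hc2, _root_.map_zero, _root_.map_zero, LinearMap.zero_apply]
    have hU1 : ∀ k, k ≠ (1:G) → ∀ z ∈ H.odd, mul (c k) z = H.b (c k) H.one • z := by
      intro k hk
      have hhom : ∀ (a : G) (z : S), z ∈ γ a → z ∈ H.odd →
          mul (c k) z = H.b (c k) H.one • z := by
        intro a z hza hzo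
        have hbz : barL z = -z := by rw [hbar, hbo1 z hzo, zero_smul, zero_sub]
        have hK := KEY a z hza k
        rw [hbz, cp_neg, cp_hom hza,
          if_neg (fun hc' => hk (mul_eq_right.mp hc')), neg_zero] at hK
        rw [_root_.map_neg] at hK
        have hK2 : mul (barL (c k)) z = 0 := by
          rw [← hnegS (mul (barL (c k)) z)]
          exact hK
        rw [hbar] at hK2
        rw [_root_.map_sub, LinearMap.sub_apply, _root_.map_smul, LinearMap.smul_apply,
          H.one_mul, sub_eq_zero] at hK2
        exact hK2.symm
      intro z hz
      calc mul (c k) z = mul (c k) (∑ j ∈ (Dec z).support, cp j z) := by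
            conv_lhs => rw [cp_sum z]
        _ = ∑ j ∈ (Dec z).support, mul (c k) (cp j z) := map_sum (mul (c k)) _ _
        _ = ∑ j ∈ (Dec z).support, H.b (c k) H.one • cp j z :=
            Finset.sum_congr rfl fun j _ => hhom j _ (cp_mem j z) (cp_odd z hz j)
        _ = H.b (c k) H.one • ∑ j ∈ (Dec z).support, cp j z := (Finset.smul_sum).symm
        _ = H.b (c k) H.one • z := by rw [← cp_sum z]
    have hbeta : ∀ k, k ≠ (1:G) → H.b (c k) H.one = 0 := by
      intro k hk
      have hcz : ∀ z ∈ H.odd, mul (c k) z = H.b (c k) H.one • z := hU1 k hk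
      have hq0c : H.q0 ⟨c k, hc_even k⟩ = H.b (c k) H.one * H.b (c k) H.one := by
        have hcomp : H.b (mul (c k) z0) (mul (c k) y0)
            = H.q0 ⟨c k, hc_even k⟩ * H.b z0 y0 := H.comp_ii₁ ⟨c k, hc_even k⟩ z0 y0
        rw [hcz z0 hz0o, hcz y0 hy0o] at hcomp
        simp only [_root_.map_smul, LinearMap.smul_apply, smul_eq_mul] at hcomp
        refine mul_right_cancel₀ hby ?_
        linear_combination -hcomp
      have hsq := H.cayley_hamilton hodd h2 (hc_even k)
      rw [hq0c] at hsq
      have hsqz : ∀ z ∈ H.odd, mul (mul (c k) (c k)) z = 0 := by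
        intro z hz
        rw [hsq]
        simp only [_root_.map_sub, LinearMap.sub_apply, _root_.map_smul, LinearMap.smul_apply]
        rw [H.one_mul, hcz z hz, smul_smul, sub_self]
      have hsqe : mul (c k) (c k) ∈ H.even := H.mul_ee _ (hc_even k) _ (hc_even k)
      have hq0sq : H.q0 ⟨mul (c k) (c k), hsqe⟩ = 0 := by
        have hcomp : H.b (mul (mul (c k) (c k)) z0) (mul (mul (c k) (c k)) y0)
            = H.q0 ⟨mul (c k) (c k), hsqe⟩ * H.b z0 y0 := H.comp_ii₁ ⟨_, hsqe⟩ z0 y0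
        rw [hsqz z0 hz0o, hsqz y0 hy0o] at hcomp
        simp only [_root_.map_zero, LinearMap.zero_apply] at hcomp
        rcases mul_eq_zero.mp hcomp.symm with h' | h'
        · exact h'
        · exact absurd h' hby
      have hq0sq2 : H.q0 ⟨mul (c k) (c k), hsqe⟩
          = (H.b (c k) H.one * H.b (c k) H.one) * (H.b (c k) H.one * H.b (c k) H.one) := by
        have hcomp : H.q0 ⟨mul (c k) (c k), hsqe⟩
            = H.q0 ⟨c k, hc_even k⟩ * H.q0 ⟨c k, hc_even k⟩ :=
          H.comp_i ⟨c k, hc_even k⟩ ⟨c k, hc_even k⟩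
        rw [hq0c] at hcomp
        exact hcomp
      have hb4 : (H.b (c k) H.one * H.b (c k) H.one)
          * (H.b (c k) H.one * H.b (c k) H.one) = 0 := hq0sq2.symm.trans hq0sq
      rcases mul_eq_zero.mp hb4 with h' | h' <;> exact mul_self_eq_zero.mp h'
    have hbmzero : ∀ m, H.b (c m) H.one = 0 := by
      intro m
      by_cases hm : m = 1
      · subst hm
        have hsumb : H.b H.one H.one = ∑ m ∈ s1, H.b (c m) H.one := by
          have := congrArg (fun u => H.b u H.one) hsum1
          rw [this, map_sum, LinearMap.sum_apply]
        by_cases h1s : (1:G) ∈ s1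
        · have hsingle : ∑ m ∈ s1, H.b (c m) H.one = H.b (c 1) H.one :=
            Finset.sum_eq_single_of_mem 1 h1s (fun b _ hbne => hbeta b hbne)
          rw [hsingle] at hsumb
          rw [← hsumb]
          exact hb11
        · have : c 1 = 0 := cp_nsupp h1s
          rw [this]
          simp
      · exact hbeta m hm
    have hkill : ∀ k, k ≠ (1:G) → c k = 0 := by
      intro k hk
      have hprod : ∀ m ∈ s1, mul (c k) (c m) = 0 := by
        intro m _
        have hK := KEY m (c m) (hc_mem m) k
        have hbk : barL (c k) = -(c k) := by
          rw [hbar, hbmzero k, zero_smul, zero_sub]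
        have hbm : barL (c m) = -(c m) := by
          rw [hbar, hbmzero m, zero_smul, zero_sub]
        rw [hbk, hbm, cp_neg, cp_hom (hc_mem m),
          if_neg (fun hc' => hk (mul_eq_right.mp hc')), neg_zero] at hK
        simp only [_root_.map_neg, LinearMap.neg_apply, neg_neg] at hK
        exact hK
      calc c k = mul (c k) H.one := (H.mul_one _).symm
        _ = ∑ m ∈ s1, mul (c k) (c m) := by
              conv_lhs => rw [hsum1]
              exact map_sum (mul (c k)) _ _
        _ = 0 := Finset.sum_eq_zero hprod
    have h1e : H.one ∈ γ 1 := by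
      rw [hsum1]
      refine Submodule.sum_mem _ (fun m _ => ?_)
      by_cases hm : m = 1
      · subst hm
        exact hc_mem 1
      · rw [hkill m hm]
        exact Submodule.zero_mem _
    have hbx1 : ∀ h, h ≠ (1:G) → ∀ x ∈ γ h, H.b x H.one = 0 := by
      intro h hh x hx
      have hp := hpara h 1 x hx H.one h1e
      rw [mul_one] at hp
      rw [hb11, zero_smul, zero_sub, _root_.map_neg, H.mul_one] at hp
      have hbarxh : H.b x H.one • H.one - x ∈ γ h := (Submodule.neg_mem_iff _).mp hp
      have hv : H.b x H.one • H.one ∈ γ h := by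
        have hadd := Submodule.add_mem _ hbarxh hx
        rw [show H.b x H.one • H.one - x + x = H.b x H.one • H.one by abel] at hadd
        exact hadd
      have hv1 : H.b x H.one • H.one ∈ γ 1 := Submodule.smul_mem _ _ h1e
      have hv0 : H.b x H.one • H.one = 0 := by
        have hc0 := cp_hom hv1 h
        rw [if_neg hh] at hc0
        have hc1 := cp_hom hv h
        rw [if_pos rfl] at hc1
        rw [← hc1, hc0]
      rcases smul_eq_zero.mp hv0 with h' | h'
      · exact h'
      · exact absurd h' hone0
    have hbarbar : ∀ x : S,
        H.b (H.b x H.one • H.one - x) H.one • H.one - (H.b x H.one • H.one - x) = x := by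
      intro x
      have e : H.b (H.b x H.one • H.one - x) H.one = -(H.b x H.one) := by
        rw [_root_.map_sub, LinearMap.sub_apply, _root_.map_smul, LinearMap.smul_apply,
          smul_eq_mul, hb11, mul_zero, zero_sub]
      rw [e, hnegF]
      exact sub_sub_cancel _ _
    intro g h x hx y hy
    have hp := hpara g h _ (hbarmem_gen h1e hbx1 g x hx) _ (hbarmem_gen h1e hbx1 h y hy)
    rw [hbarbar x, hbarbar y] at hp
    exact hp
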